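/- Let p and q be relatively prime positive integers with q < p, let σ > 0 be real, set λ = q/p, and let A_1, …, A_p be the unique complex constants such that Σ_{j=1}^{p} A_j·n^{\underline{j}} = (1/σ^p)·(n/λ)^{\underline{p}} for all n ∈ ℂ. Then the entire function f(z) = Σ_{t=0}^∞ (σ^{pt}/(pt)!) · z^{\underline{qt}} satisfies the linear difference equation A_p·z^{\underline{p}}·Δ^p f(z−p) + ⋯ + A_1·z·Δf(z−1) − z^{\underline{q}}·f(z−q) = 0 for all z ∈ ℂ. -/
import Mathlib


open Finset

/-- The falling factorial `z(z-1)⋯(z-n+1)`. -/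
noncomputable def ff (z : ℂ) (n : ℕ) : ℂ := ∏ k ∈ Finset.range n, (z - (k : ℂ))

/-- The difference operator `Δf(z) = f(z+1) - f(z)`. -/
noncomputable def Δ (f : ℂ → ℂ) : ℂ → ℂ := fun z => f (z + 1) - f z

lemma ff_add (z : ℂ) (a b : ℕ) : ff z (a + b) = ff z a * ff (z - a) b := by
  unfold ff
  rw [Finset.prod_range_add]
  congr 1
  refine Finset.prod_congr rfl fun k _ => ?_
  push_cast; ring

lemma ff_nat_cast (n j : ℕ) : ff (n : ℂ) j = (n.descFactorial j : ℂ) := by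
  induction j with
  | zero => simp [ff]
  | succ j ih =>
    rw [show ff (n:ℂ) (j+1) = ff n j * ((n:ℂ) - j) from Finset.prod_range_succ _ _,
      ih, Nat.descFactorial_succ]
    rcases le_or_gt j n with h | h
    · rw [Nat.cast_mul, Nat.cast_sub h]; ring
    · rw [Nat.descFactorial_eq_zero_iff_lt.mpr h]; simp

lemma delta_ff (n : ℕ) : Δ (fun w => ff w n) = fun z => (n : ℂ) * ff z (n - 1) := by
  funext z
  cases n with
  | zero => simp [Δ, ff]
  | succ m =>
    have h1 : ff (z + 1) (m + 1) = (z + 1) * ff z m := by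
      unfold ff
      rw [Finset.prod_range_succ']
      simp only [Nat.cast_zero, sub_zero, Nat.cast_add, Nat.cast_one]
      rw [mul_comm]
      congr 1
      refine Finset.prod_congr rfl fun k _ => ?_
      ring
    have h2 : ff z (m + 1) = ff z m * (z - m) := Finset.prod_range_succ _ _
    simp only [Δ, h1, h2, Nat.add_sub_cancel]
    push_cast; ring

lemma delta_scale (c : ℂ) (g : ℂ → ℂ) : Δ (fun w => c * g w) = fun w => c * Δ g w := by
  funext w; simp only [Δ]; ring

lemma iter_delta_scale (j : ℕ) : ∀ (c : ℂ) (g : ℂ → ℂ),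
    Δ^[j] (fun w => c * g w) = fun z => c * Δ^[j] g z := by
  induction j with
  | zero => intro c g; rfl
  | succ j ih =>
    intro c g
    rw [Function.iterate_succ_apply, Function.iterate_succ_apply, delta_scale, ih c (Δ g)]

lemma iter_delta_ff (j : ℕ) : ∀ n : ℕ,
    Δ^[j] (fun w => ff w n) = fun z => (n.descFactorial j : ℂ) * ff z (n - j) := by
  induction j with
  | zero => intro n; simp
  | succ j ih =>
    intro n
    rw [Function.iterate_succ_apply, delta_ff, iter_delta_scale, ih]
    funext z
    cases n with
    | zero => simp
    | succ m =>
      rw [Nat.succ_descFactorial_succ, Nat.add_sub_cancel]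
      push_cast
      ring

lemma descFactorial_mul_factorial (a k : ℕ) :
    (a + k).descFactorial k * Nat.factorial a = Nat.factorial (a + k) := by
  induction k with
  | zero => simp
  | succ k ih =>
    rw [show a + (k+1) = (a + k) + 1 from rfl, Nat.succ_descFactorial_succ, Nat.factorial_succ,
      mul_assoc, ih]

lemma ff_mul_descF (z : ℂ) (n j : ℕ) :
    ff z j * ((n.descFactorial j : ℂ) * ff (z - j) (n - j)) = (n.descFactorial j : ℂ) * ff z n := by
  rcases le_or_gt j n with h | h
  · have h2 := ff_add z j (n - j)
    rw [Nat.add_sub_cancel' h] at h2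
    rw [h2]; ring
  · rw [Nat.descFactorial_eq_zero_iff_lt.mpr h]; simp

theorem constructed_series_solves_equation
    (p q : ℕ) (hq : 0 < q) (hqp : q < p) (hcop : Nat.Coprime p q)
    (σ : ℝ) (hσ : 0 < σ)
    (A : ℕ → ℂ)
    (hA : ∀ n : ℂ, ∑ j ∈ Finset.Icc 1 p, A j * ff n j =
      (1 / (σ : ℂ) ^ p) * ∏ k ∈ Finset.range p, (n / ((q : ℂ) / (p : ℂ)) - (k : ℂ)))
    (f : ℂ → ℂ)
    (hf : ∀ z : ℂ, HasSum
      (fun t => ((σ ^ (p * t) / (Nat.factorial (p * t)) : ℝ) : ℂ) * ff z (q * t)) (f z)) :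
    ∀ z : ℂ,
      (∑ j ∈ Finset.Icc 1 p, A j * ff z j * (Δ^[j] f) (z - (j : ℂ))) -
        ff z q * f (z - (q : ℂ)) = 0 := by
  intro z
  set C : ℕ → ℂ := fun t => ((σ ^ (p * t) / (Nat.factorial (p * t)) : ℝ) : ℂ) with hC
  have hσ0 : (σ : ℂ) ≠ 0 := by exact_mod_cast hσ.ne'
  -- iterated differences of f, termwise
  have key : ∀ (j : ℕ) (w : ℂ),
      HasSum (fun t : ℕ => C t * (Δ^[j] (fun u => ff u (q*t))) w) ((Δ^[j] f) w) := by
    intro j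
    induction j with
    | zero => intro w; exact hf w
    | succ j ih =>
      intro w
      have h := (ih (w+1)).sub (ih w)
      simp only [Function.iterate_succ_apply', Δ]
      simpa [mul_sub] using h
  have key2 : ∀ (j : ℕ) (w : ℂ),
      HasSum (fun t : ℕ => C t * (((q*t).descFactorial j : ℂ) * ff w (q*t - j)))
        ((Δ^[j] f) w) := by
    intro j w
    have h := key j w
    simpa only [iter_delta_ff] using h
  have hsum1 : HasSum
      (fun t : ℕ => ∑ j ∈ Finset.Icc 1 p,
        A j * ff z j * (C t * (((q*t).descFactorial j : ℂ) * ff (z - j) (q*t - j))))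
      (∑ j ∈ Finset.Icc 1 p, A j * ff z j * (Δ^[j] f) (z - j)) :=
    hasSum_sum fun j _ => (key2 j (z - j)).mul_left (A j * ff z j)
  set v : ℕ → ℂ := fun t => if t = 0 then 0 else C (t-1) * ff z (q*t) with hv
  have hterm : ∀ t : ℕ,
      (∑ j ∈ Finset.Icc 1 p,
        A j * ff z j * (C t * (((q*t).descFactorial j : ℂ) * ff (z - j) (q*t - j)))) = v t := by
    intro t
    have hstep : ∀ j ∈ Finset.Icc 1 p,
        A j * ff z j * (C t * (((q*t).descFactorial j : ℂ) * ff (z - j) (q*t - j)))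
        = (A j * ((q*t).descFactorial j : ℂ)) * (C t * ff z (q*t)) := by
      intro j _
      linear_combination (A j * C t) * (ff_mul_descF z (q*t) j)
    rw [Finset.sum_congr rfl hstep, ← Finset.sum_mul]
    have hS : (∑ j ∈ Finset.Icc 1 p, A j * ((q*t).descFactorial j : ℂ))
        = (1 / (σ:ℂ)^p) * ((p*t).descFactorial p : ℂ) := by
      have h1 := hA ((q*t : ℕ) : ℂ)
      simp only [ff_nat_cast] at h1
      rw [h1]
      congr 1
      rw [← ff_nat_cast]
      unfold ff
      refine Finset.prod_congr rfl fun k _ => ?_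
      congr 1
      have hq0 : (q:ℂ) ≠ 0 := Nat.cast_ne_zero.mpr hq.ne'
      have hp0 : (p:ℂ) ≠ 0 := Nat.cast_ne_zero.mpr (by omega)
      field_simp
      push_cast
      ring
    rw [hS]
    cases t with
    | zero =>
      have h0 : (p*0).descFactorial p = 0 := by
        rw [mul_zero]; exact Nat.descFactorial_eq_zero_iff_lt.mpr (by omega)
      simp only [hv, h0, Nat.cast_zero, if_pos rfl]
      ring
    | succ s =>
      have hsc : (1/(σ:ℂ)^p) * ((p*(s+1)).descFactorial p : ℂ) * C (s+1) = C s := by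
        simp only [hC]
        have hps : p * (s+1) = p * s + p := by ring
        have hfac := descFactorial_mul_factorial (p*s) p
        have hfc : (((p*s+p).descFactorial p : ℕ) : ℂ) * ((Nat.factorial (p*s) : ℕ) : ℂ)
            = ((Nat.factorial (p*s+p) : ℕ) : ℂ) := by exact_mod_cast congrArg (Nat.cast (R := ℂ)) hfac
        have h1 : ((Nat.factorial (p*s+p) : ℕ) : ℂ) ≠ 0 := by
          exact_mod_cast (Nat.factorial_pos _).ne'
        have h2 : ((Nat.factorial (p*s) : ℕ) : ℂ) ≠ 0 := by
          exact_mod_cast (Nat.factorial_pos _).ne'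
        rw [hps]
        push_cast
        field_simp
        rw [pow_add]
        linear_combination ((σ:ℂ)^(p*s) * (σ:ℂ)^p) * hfc
      simp only [hv, if_neg (Nat.succ_ne_zero s), Nat.add_sub_cancel]
      linear_combination (ff z (q*(s+1))) * hsc
  have hv1 : HasSum v (∑ j ∈ Finset.Icc 1 p, A j * ff z j * (Δ^[j] f) (z - j)) := by
    exact (funext hterm : _ = v) ▸ hsum1
  have hterm2 : ∀ t : ℕ, ff z q * (C t * ff (z - q) (q*t)) = v (t+1) := by
    intro t
    simp only [hv, if_neg (Nat.succ_ne_zero t), Nat.add_sub_cancel]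
    rw [show q*(t+1) = q + q*t from by ring, ff_add]
    ring
  have hv2 : HasSum (fun t => v (t+1)) (ff z q * f (z - q)) := by
    have h2 := (hf (z - q)).mul_left (ff z q)
    exact (funext hterm2 : _ = fun t => v (t+1)) ▸ h2
  have hv2' : HasSum v (ff z q * f (z - q)) := by
    have h3 := (hasSum_nat_add_iff 1).mp hv2
    simpa [hv] using h3
  rw [hv1.unique hv2']
  ring
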